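/- Let G be a group, B a G-invariant Boolean algebra of subsets of G, S the Stone space of B with its G-action by left translation. Suppose that every minimal closed G-invariant subset of S is a singleton. Then for every Y ∈ B that (as a clopen subset of S) meets some minimal closed G-invariant subset of S, we have Y Y⁻¹ = G. -/
import Mathlib


/-- The left translate `gY` of a subset of a group. -/
def LTrans {G : Type*} [Group G] (g : G) (Y : Set G) : Set G := (g * ·) '' Y

/-- `B` is a Boolean algebra of subsets of `G` closed under left translations. -/
def IsInvBoolAlg {G : Type*} [Group G] (B : Set (Set G)) : Prop :=
  Set.univ ∈ B ∧ (∀ Y ∈ B, Yᶜ ∈ B) ∧ (∀ Y ∈ B, ∀ Z ∈ B, Y ∩ Z ∈ B) ∧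
    ∀ (g : G), ∀ Y ∈ B, LTrans g Y ∈ B

/-- `p` is an ultrafilter on the Boolean algebra `B` of subsets. -/
def IsUltraOn {α : Type*} (B p : Set (Set α)) : Prop :=
  p ⊆ B ∧ Set.univ ∈ p ∧ ∅ ∉ p ∧ (∀ Y ∈ p, ∀ Z ∈ p, Y ∩ Z ∈ p) ∧
    (∀ Y ∈ p, ∀ Z ∈ B, Y ⊆ Z → Z ∈ p) ∧ ∀ Y ∈ B, Y ∈ p ∨ Yᶜ ∈ p

/-- `Y` is left generic: finitely many left translates of `Y` cover `G`. -/
def IsLeftGeneric {G : Type*} [Group G] (Y : Set G) : Prop :=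
  ∃ F : Finset G, ⋃ g ∈ F, LTrans g Y = Set.univ

/-- The set `Y · Y⁻¹ = {a b⁻¹ : a, b ∈ Y}`. -/
def MulInvSet {G : Type*} [Group G] (Y : Set G) : Set G :=
  {x | ∃ a ∈ Y, ∃ b ∈ Y, x = a * b⁻¹}

/-- The Stone space of the Boolean algebra `B`: the set of ultrafilters on `B`. -/
abbrev StoneS {α : Type*} (B : Set (Set α)) : Type _ := {p : Set (Set α) // IsUltraOn B p}

/-- The Stone topology, generated by the basic (cl)open sets `{p : Y ∈ p}`, `Y ∈ B`. -/
instance stoneTop {α : Type*} (B : Set (Set α)) : TopologicalSpace (StoneS B) :=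
  TopologicalSpace.generateFrom {U | ∃ Y ∈ B, U = {p : StoneS B | Y ∈ p.1}}

/-- The translation action of `G` on ultrafilters: `Y ∈ g·p ↔ g⁻¹Y ∈ p`. -/
def actUF {G : Type*} [Group G] (g : G) (p : Set (Set G)) : Set (Set G) :=
  {Y | LTrans g⁻¹ Y ∈ p}

/-- `M` is a `G`-subflow of the Stone space: nonempty, closed and `G`-invariant. -/
def IsSubflow {G : Type*} [Group G] (B : Set (Set G)) (M : Set (StoneS B)) : Prop :=
  M.Nonempty ∧ IsClosed M ∧ ∀ (g : G), ∀ q ∈ M, ∃ q' ∈ M, q'.1 = actUF g q.1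

/-- `M` is a minimal `G`-subflow of the Stone space. -/
def IsMinSubflow {G : Type*} [Group G] (B : Set (Set G)) (M : Set (StoneS B)) : Prop :=
  IsSubflow B M ∧ ∀ M' ⊆ M, IsSubflow B M' → M' = M

/-- If every minimal closed `G`-invariant subset of the Stone space of `B` is a singleton,
then every `Y ∈ B` which (as a clopen set) meets some minimal subflow satisfies
`Y Y⁻¹ = G`. -/
theorem stmt_9 {G : Type*} [Group G] (B : Set (Set G)) (hB : IsInvBoolAlg B)
    (hsing : ∀ M : Set (StoneS B), IsMinSubflow B M → ∃ p, M = {p}) :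
    ∀ Y ∈ B, ∀ M : Set (StoneS B), IsMinSubflow B M →
      (M ∩ {p : StoneS B | Y ∈ p.1}).Nonempty → MulInvSet Y = Set.univ := by
  intro Y hY M hM hne
  obtain ⟨p, rfl⟩ := hsing M hM
  obtain ⟨q, hqM, hYq⟩ := hne
  have hqp : q = p := hqM
  have hYp : Y ∈ p.1 := hqp ▸ hYq
  obtain ⟨hsub, huniv, hne0, hinter, hup, htot⟩ := p.2
  have htrans : ∀ x : G, LTrans x Y ∈ p.1 := by
    intro x
    obtain ⟨q', hq', he⟩ := hM.1.2.2 x p rfl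
    have hq'p : q' = p := hq'
    rw [hq'p] at he
    have hmem : LTrans x Y ∈ actUF x p.1 := by
      show LTrans x⁻¹ (LTrans x Y) ∈ p.1
      have heq : LTrans x⁻¹ (LTrans x Y) = Y := by
        simp only [LTrans, Set.image_image]
        simp
      rwa [heq]
    rwa [← he] at hmem
  ext x
  simp only [Set.mem_univ, iff_true]
  have hmem : Y ∩ LTrans x Y ∈ p.1 := hinter Y hYp _ (htrans x)
  have hnonempty : (Y ∩ LTrans x Y).Nonempty := by
    rcases Set.eq_empty_or_nonempty (Y ∩ LTrans x Y) with h | h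
    · rw [h] at hmem; exact absurd hmem hne0
    · exact h
  obtain ⟨a, haY, b, hbY, hab⟩ := hnonempty
  exact ⟨a, haY, b, hbY, by rw [← hab]; group⟩
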